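/- For 2β = −p and 2(α+β) = −q (p, q natural numbers), the even operators ∂_z, z∂_z + αθ∂_θ + β, z²∂_z + 2αzθ∂_θ + 2βz preserve the module n^{3.3} = span{ z^j : 0 ≤ j ≤ p } ⊕ span{ z^k θ : 0 ≤ k ≤ q } of Λ¹-valued polynomials. -/
import Mathlib

open Polynomial

private lemma aux2 (c : ℂ) (r : ℕ) (f : Polynomial ℂ) (hf : f.degree ≤ r) :
    (X * derivative f + c • f).degree ≤ (r : WithBot ℕ) := by
  rw [Polynomial.degree_le_iff_coeff_zero] at hf ⊢
  intro m hm
  have hm1 : 1 ≤ m := by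
    rcases Nat.eq_zero_or_pos m with h | h
    · subst h; exact absurd hm (by simp)
    · exact h
  obtain ⟨k, rfl⟩ := Nat.exists_eq_add_of_le hm1
  rw [add_comm 1 k] at hm ⊢
  simp only [coeff_add, coeff_smul, mul_comm X, coeff_mul_X, coeff_derivative]
  have h1 : f.coeff (k + 1) = 0 := hf _ hm
  have h2 : f.coeff (k + 1 + 1) = 0 := hf _ (lt_trans hm (by exact_mod_cast Nat.lt_succ_self (k+1)))
  simp [h1, h2]

private lemma aux3 (c : ℂ) (r : ℕ) (hc : 2 * c = -(r : ℂ)) (f : Polynomial ℂ)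
    (hf : f.degree ≤ r) :
    (X ^ 2 * derivative f + (2 * c) • (X * f)).degree ≤ (r : WithBot ℕ) := by
  rw [Polynomial.degree_le_iff_coeff_zero] at hf ⊢
  intro m hm
  have hm1 : 1 ≤ m := by
    rcases Nat.eq_zero_or_pos m with h | h
    · subst h; exact absurd hm (by simp)
    · exact h
  obtain ⟨k, rfl⟩ := Nat.exists_eq_add_of_le hm1
  rw [add_comm 1 k] at hm ⊢
  rcases Nat.eq_zero_or_pos k with hk | hk
  · subst hk
    have hr : r = 0 := by
      have : (r : WithBot ℕ) < (1 : ℕ) := hm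
      exact_mod_cast Nat.lt_one_iff.mp (by exact_mod_cast this)
    subst hr
    have hc0 : c = 0 := by
      have : 2 * c = 0 := by simpa using hc
      linear_combination this / 2
    subst hc0
    simp only [coeff_add, coeff_smul, mul_comm X, coeff_mul_X]
    have : (X ^ 2 * derivative f).coeff 1 = 0 := by
      rw [mul_comm, coeff_mul_X_pow']
      simp
    simp [this]
  · obtain ⟨j, rfl⟩ := Nat.exists_eq_add_of_le hk
    rw [add_comm 1 j] at hm ⊢
    -- m = j + 2
    have e1 : (X ^ 2 * derivative f).coeff (j + 1 + 1) = f.coeff (j + 1) * (j + 1) := by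
      have : j + 1 + 1 = j + 2 := by ring
      rw [this, coeff_X_pow_mul, coeff_derivative]
    have e2 : (X * f).coeff (j + 1 + 1) = f.coeff (j + 1) := by
      rw [mul_comm, coeff_mul_X]
    rw [coeff_add, coeff_smul, e1, e2, smul_eq_mul]
    rcases lt_or_eq_of_le (show r ≤ j + 1 by
      have : (r : WithBot ℕ) < ((j + 1 + 1 : ℕ) : WithBot ℕ) := hm
      have := (Nat.cast_lt (α := WithBot ℕ)).mp this
      omega) with h | h
    · rw [hf (j+1) (by exact_mod_cast h)]; ring
    · subst h
      rw [hc]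
      push_cast
      ring

/-- For `2β = −p` and `2(α+β) = −q`, the even operators `∂_z`, `z∂_z + αθ∂_θ + β`,
`z²∂_z + 2αzθ∂_θ + 2βz` preserve the module `n^{3.3}` of pairs `(f, g)` (modeling
`f + gθ`) with `deg f ≤ p`, `deg g ≤ q`. -/
theorem stmt12 (α β : ℂ) (p q : ℕ) (hβ : 2 * β = -(p : ℂ))
    (hαβ : 2 * (α + β) = -(q : ℂ)) :
    ∀ f g : Polynomial ℂ,
      f ∈ Polynomial.degreeLE ℂ (p : WithBot ℕ) →
      g ∈ Polynomial.degreeLE ℂ (q : WithBot ℕ) →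
      (derivative f ∈ Polynomial.degreeLE ℂ (p : WithBot ℕ) ∧
        derivative g ∈ Polynomial.degreeLE ℂ (q : WithBot ℕ)) ∧
      (X * derivative f + β • f ∈ Polynomial.degreeLE ℂ (p : WithBot ℕ) ∧
        X * derivative g + (α + β) • g ∈ Polynomial.degreeLE ℂ (q : WithBot ℕ)) ∧
      (X ^ 2 * derivative f + (2 * β) • (X * f) ∈ Polynomial.degreeLE ℂ (p : WithBot ℕ) ∧
        X ^ 2 * derivative g + (2 * α + 2 * β) • (X * g) ∈
          Polynomial.degreeLE ℂ (q : WithBot ℕ)) := by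
  intro f g hf hg
  rw [Polynomial.mem_degreeLE] at hf hg
  have h2 : 2 * α + 2 * β = 2 * (α + β) := by ring
  refine ⟨⟨?_, ?_⟩, ⟨?_, ?_⟩, ?_, ?_⟩ <;> rw [Polynomial.mem_degreeLE]
  · exact le_trans (degree_derivative_le) hf
  · exact le_trans (degree_derivative_le) hg
  · exact aux2 β p f hf
  · exact aux2 (α + β) q g hg
  · exact aux3 β p hβ f hf
  · rw [h2]; exact aux3 (α + β) q hαβ g hg
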